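/- Fix an integer q ≥ 2, let b_m denote the number of 1-unbordered words of length m over ℤ/qℤ, and let β = ∑_{m≥0} b_m X^m ∈ ℤ[[X]]. Then (1 − qX)·β(X) = 3 − 2·β(X²), where β(X²) denotes the power series obtained from β by substituting X² for X. -/

import Mathlib

/-- For a word `W` over `ℤ/qℤ`, `addOneFirst W` is the word `W'` obtained by adding `1`
to the first letter of `W` (and the empty word for the empty word). -/
def addOneFirst {q : ℕ} : List (ZMod q) → List (ZMod q)
  | [] => []
  | x :: xs => (x + 1) :: xs

/-- A word `W` over `ℤ/qℤ` is 1-unbordered if no nonempty proper suffix of `W` is equal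
to a prefix of `W` or to a prefix of `W'` (where `W'` is `W` with `1` added to its first
letter). -/
def OneUnbordered {q : ℕ} (W : List (ZMod q)) : Prop :=
  ∀ S : List (ZMod q), S ≠ [] → S.length < W.length → S <:+ W →
    ¬ S <+: W ∧ ¬ S <+: addOneFirst W

/-- The number of 1-unbordered words of length `m` over `ℤ/qℤ`. -/
noncomputable def countOneUnbordered (q m : ℕ) : ℕ :=
  Nat.card {w : List (ZMod q) // w.length = m ∧ OneUnbordered w}

/-- Substituting `X²` for `X` in a formal power series over `ℤ`:
the coefficient of `X^m` in `φ(X²)` is the coefficient of `X^(m/2)` in `φ` when `m` is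
even, and `0` otherwise. -/
noncomputable def substXsq (φ : PowerSeries ℤ) : PowerSeries ℤ :=
  PowerSeries.mk fun m => if 2 ∣ m then PowerSeries.coeff (R := ℤ) (m / 2) φ else 0

namespace OUP
variable {q : ℕ}

/-- index access with default 0 -/
def g (W : List (ZMod q)) (i : ℕ) : ZMod q := W.getD i 0

lemma g_eq_getElem (W : List (ZMod q)) {i : ℕ} (h : i < W.length) : g W i = W[i] := by
  simp [g, List.getD_eq_getElem?_getD, List.getElem?_eq_getElem h]

lemma list_eq_iff_g {l₁ l₂ : List (ZMod q)} (h : l₁.length = l₂.length) :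
    l₁ = l₂ ↔ ∀ i < l₁.length, g l₁ i = g l₂ i := by
  constructor
  · rintro rfl; intro _ _; rfl
  · intro hg
    refine List.ext_getElem h fun n h₁ h₂ => ?_
    have := hg n h₁
    rwa [g_eq_getElem _ h₁, g_eq_getElem _ h₂] at this

lemma g_drop (W : List (ZMod q)) (k i : ℕ) : g (W.drop k) i = g W (k + i) := by
  simp [g, List.getD_eq_getElem?_getD, List.getElem?_drop]

lemma g_take {W : List (ZMod q)} {k i : ℕ} (h : i < k) : g (W.take k) i = g W i := by
  simp [g, List.getD_eq_getElem?_getD, List.getElem?_take, h]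

lemma g_append_left {A B : List (ZMod q)} {i : ℕ} (h : i < A.length) :
    g (A ++ B) i = g A i := by
  simp [g, List.getD_eq_getElem?_getD, List.getElem?_append_left h]

lemma g_append_right {A B : List (ZMod q)} {i : ℕ} (h : A.length ≤ i) :
    g (A ++ B) i = g B (i - A.length) := by
  simp [g, List.getD_eq_getElem?_getD, List.getElem?_append_right h]

lemma length_addOneFirst (W : List (ZMod q)) : (addOneFirst W).length = W.length := by
  cases W <;> simp [addOneFirst]

lemma g_addOneFirst_zero {W : List (ZMod q)} (h : W ≠ []) :
    g (addOneFirst W) 0 = g W 0 + 1 := by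
  cases W with
  | nil => simp at h
  | cons x xs => simp [addOneFirst, g]

lemma g_addOneFirst_pos {W : List (ZMod q)} {i : ℕ} (h : 0 < i) :
    g (addOneFirst W) i = g W i := by
  cases W with
  | nil => simp [addOneFirst]
  | cons x xs =>
    obtain ⟨j, rfl⟩ := Nat.exists_eq_add_of_lt h
    simp [addOneFirst, g]

/-- `W` has a "quasi-border" corresponding to the shift `s`. -/
def QS (W : List (ZMod q)) (s : ℕ) : Prop :=
  (∀ i, 0 < i → s + i < W.length → g W (s + i) = g W i) ∧
  (g W s = g W 0 ∨ g W s = g W 0 + 1)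

lemma qs_iff {W : List (ZMod q)} {s : ℕ} (hs : 0 < s) (hsn : s < W.length) :
    QS W s ↔ (W.drop s = W.take (W.length - s) ∨
      W.drop s = (addOneFirst W).take (W.length - s)) := by
  have hne : W ≠ [] := by
    intro h; rw [h] at hsn; simp at hsn
  have hlen1 : (W.drop s).length = W.length - s := by simp
  have hlen2 : (W.take (W.length - s)).length = W.length - s := by
    simp only [List.length_take]; omega
  have hlen3 : ((addOneFirst W).take (W.length - s)).length = W.length - s := by
    simp only [List.length_take, length_addOneFirst]; omega
  constructor
  · rintro ⟨h1, h2⟩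
    rcases h2 with h2 | h2
    · left
      rw [list_eq_iff_g (by rw [hlen1, hlen2])]
      intro i hi
      rw [hlen1] at hi
      rw [g_drop, g_take (by omega)]
      rcases Nat.eq_zero_or_pos i with rfl | hip
      · simpa using h2
      · exact h1 i hip (by omega)
    · right
      rw [list_eq_iff_g (by rw [hlen1, hlen3])]
      intro i hi
      rw [hlen1] at hi
      rw [g_drop, g_take (by omega)]
      rcases Nat.eq_zero_or_pos i with rfl | hip
      · rw [g_addOneFirst_zero hne]; simpa using h2
      · rw [g_addOneFirst_pos hip]; exact h1 i hip (by omega)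
  · intro h
    rcases h with h | h
    · rw [list_eq_iff_g (by rw [hlen1, hlen2])] at h
      refine ⟨fun i hip hin => ?_, Or.inl ?_⟩
      · have := h i (by omega)
        rwa [g_drop, g_take (by omega)] at this
      · have := h 0 (by rw [hlen1]; omega)
        rwa [g_drop, g_take (by omega), Nat.add_zero] at this
    · rw [list_eq_iff_g (by rw [hlen1, hlen3])] at h
      refine ⟨fun i hip hin => ?_, Or.inr ?_⟩
      · have := h i (by omega)
        rwa [g_drop, g_take (by omega), g_addOneFirst_pos hip] at this
      · have := h 0 (by rw [hlen1]; omega)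
        rwa [g_drop, g_take (by omega), g_addOneFirst_zero hne, Nat.add_zero] at this

lemma ou_iff_qs (W : List (ZMod q)) :
    OneUnbordered W ↔ ∀ s, 0 < s → s < W.length → ¬ QS W s := by
  constructor
  · intro hou s hs hsn hqs
    rw [qs_iff hs hsn] at hqs
    have hd : (W.drop s) <:+ W := List.drop_suffix s W
    have hlen : (W.drop s).length = W.length - s := by simp
    have hne : W.drop s ≠ [] := by
      intro h
      have := congrArg List.length h
      simp at this; omega
    have := hou (W.drop s) hne (by omega) hd
    rcases hqs with h | h
    · exact this.1 (by rw [List.prefix_iff_eq_take, hlen]; exact h)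
    · exact this.2 (by
        rw [List.prefix_iff_eq_take, hlen]; exact h)
  · intro h S hne hlt hsuf
    set s := W.length - S.length with hs
    have hSlen : 0 < S.length := List.length_pos_iff.mpr hne
    have hdrop : S = W.drop s := by
      rw [List.suffix_iff_eq_drop] at hsuf; exact hsuf
    have hqs := h s (by omega) (by omega)
    rw [qs_iff (by omega) (by omega)] at hqs
    push_neg at hqs
    have hsl : S.length = W.length - s := by omega
    constructor
    · intro hp
      rw [List.prefix_iff_eq_take, hsl] at hp
      exact hqs.1 (by rw [← hdrop]; exact hp)
    · intro hp
      rw [List.prefix_iff_eq_take, hsl] at hp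
      exact hqs.2 (by rw [← hdrop]; exact hp)

end OUP

namespace OUP
variable {q : ℕ}

lemma QS.double {W : List (ZMod q)} {s : ℕ} (h : QS W s) (hs : 0 < s)
    (h2 : 2 * s < W.length) : QS W (2 * s) := by
  obtain ⟨h1, hend⟩ := h
  constructor
  · intro i hip hin
    have e1 : g W (2 * s + i) = g W (s + i) := by
      have := h1 (s + i) (by omega) (by omega)
      rw [← this]; ring_nf
    rw [e1]
    exact h1 i hip (by omega)
  · have : g W (2 * s) = g W s := by
      have := h1 s hs (by omega)
      rw [← this]; ring_nf
    rw [this]; exact hend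

lemma exists_half_qs {W : List (ZMod q)} :
    ∀ d s, W.length - s ≤ d → 0 < s → s < W.length → QS W s →
      ∃ t, QS W t ∧ W.length ≤ 2 * t ∧ t < W.length := by
  intro d
  induction d with
  | zero => intro s h hs hsn _; omega
  | succ d ih =>
    intro s h hs hsn hqs
    by_cases hc : W.length ≤ 2 * s
    · exact ⟨s, hqs, hc, hsn⟩
    · exact ih (2 * s) (by omega) (by omega) (by omega) (hqs.double hs (by omega))

/-- the restricted characterization -/
def OU' (W : List (ZMod q)) : Prop :=
  ∀ s, W.length ≤ 2 * s → s < W.length → ¬ QS W s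

lemma ou_iff_ou' (W : List (ZMod q)) : OneUnbordered W ↔ OU' W := by
  rw [ou_iff_qs]
  constructor
  · intro h s _ hsn; exact h s (by omega) hsn
  · intro h s hs hsn hqs
    obtain ⟨t, hqt, ht1, ht2⟩ := exists_half_qs (W.length - s) s le_rfl hs hsn hqs
    exact h t ht1 ht2 hqt

/-- delete position `p` -/
def del (W : List (ZMod q)) (p : ℕ) : List (ZMod q) := W.take p ++ W.drop (p + 1)

/-- insert `c` at position `p` -/
def ins (U : List (ZMod q)) (p : ℕ) (c : ZMod q) : List (ZMod q) :=
  U.take p ++ c :: U.drop p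

lemma length_del {W : List (ZMod q)} {p : ℕ} (h : p < W.length) :
    (del W p).length = W.length - 1 := by
  simp [del]; omega

lemma length_ins {U : List (ZMod q)} {p : ℕ} (h : p ≤ U.length) (c : ZMod q) :
    (ins U p c).length = U.length + 1 := by
  simp [ins]; omega

lemma g_del_lt {W : List (ZMod q)} {p j : ℕ} (hp : p ≤ W.length) (h : j < p) :
    g (del W p) j = g W j := by
  rw [del, g_append_left (by simp; omega), g_take h]

lemma g_del_ge {W : List (ZMod q)} {p j : ℕ} (hp : p ≤ W.length) (h : p ≤ j) :
    g (del W p) j = g W (j + 1) := by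
  rw [del, g_append_right (by simp; omega), g_drop]
  congr 1
  simp only [List.length_take]
  omega

lemma g_ins_lt {U : List (ZMod q)} {p j : ℕ} {c : ZMod q} (hp : p ≤ U.length) (h : j < p) :
    g (ins U p c) j = g U j := by
  rw [ins, g_append_left (by simp; omega), g_take h]

lemma g_ins_self {U : List (ZMod q)} {p : ℕ} {c : ZMod q} (hp : p ≤ U.length) :
    g (ins U p c) p = c := by
  rw [ins, g_append_right (by simp only [List.length_take]; omega)]
  have : p - (U.take p).length = 0 := by simp only [List.length_take]; omega
  rw [this]; rfl

lemma g_ins_gt {U : List (ZMod q)} {p j : ℕ} {c : ZMod q} (hp : p ≤ U.length) (h : p ≤ j) :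
    g (ins U p c) (j + 1) = g U j := by
  rw [ins, g_append_right (by simp; omega)]
  have : j + 1 - (U.take p).length = (j - p) + 1 := by simp; omega
  rw [this]
  show g (U.drop p) (j - p) = g U j
  rw [g_drop]
  congr 1; omega

lemma ins_del {W : List (ZMod q)} {p : ℕ} (h : p < W.length) :
    ins (del W p) p (g W p) = W := by
  have ht : (del W p).take p = W.take p := by
    rw [del, List.take_append_of_le_length (by simp; omega)]
    simp [List.take_take]
  have hd : (del W p).drop p = W.drop (p + 1) := by
    rw [del, List.drop_append_of_le_length (by simp; omega)]
    have : (W.take p).drop p = [] := by simp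
    rw [this, List.nil_append]
  rw [ins, ht, hd, g_eq_getElem _ h, ← List.drop_eq_getElem_cons h, List.take_append_drop]

lemma del_ins {U : List (ZMod q)} {p : ℕ} {c : ZMod q} (h : p ≤ U.length) :
    del (ins U p c) p = U := by
  have ht : (ins U p c).take p = U.take p := by
    rw [ins, List.take_append_of_le_length (by simp; omega)]
    simp [List.take_take]
  have hd : (ins U p c).drop (p + 1) = U.drop p := by
    rw [ins, show p + 1 = (U.take p).length + 1 by simp only [List.length_take]; omega,
      List.drop_append]
    simp
  rw [del, ht, hd, List.take_append_drop]

end OUP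

namespace OUP
variable {q : ℕ}

lemma ou_short {W : List (ZMod q)} (h : W.length ≤ 1) : OneUnbordered W := by
  intro S hne hlt _
  have := List.length_pos_iff.mpr hne
  omega

lemma qs_del_iff {W : List (ZMod q)} {p s : ℕ} (hpn : p < W.length)
    (hp : 1 ≤ p) (hps : p ≤ s) (hs : W.length ≤ p + s + 1) :
    QS (del W p) s ↔ QS W (s + 1) := by
  have hpn' : p ≤ W.length := le_of_lt hpn
  have hlen : (del W p).length = W.length - 1 := length_del hpn
  constructor
  · rintro ⟨h1, h2⟩
    constructor
    · intro i hip hin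
      have hi : i < p := by omega
      have := h1 i hip (by omega)
      rwa [g_del_ge hpn' (by omega), g_del_lt hpn' hi,
        show s + i + 1 = s + 1 + i by omega] at this
    · have := h2
      rwa [g_del_ge hpn' hps, g_del_lt hpn' hp] at this
  · rintro ⟨h1, h2⟩
    constructor
    · intro i hip hin
      have hi : i < p := by omega
      have := h1 i hip (by omega)
      rwa [show s + 1 + i = s + i + 1 by omega, ← g_del_ge hpn' (by omega),
        ← g_del_lt hpn' hi] at this
    · rwa [g_del_ge hpn' hps, g_del_lt hpn' hp]

lemma ou_odd {W : List (ZMod q)} {k : ℕ} (hW : W.length = 2 * k + 1) :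
    OneUnbordered W ↔ OneUnbordered (del W k) := by
  have hkn : k < W.length := by omega
  have hlen : (del W k).length = 2 * k := by rw [length_del hkn]; omega
  rcases Nat.eq_zero_or_pos k with rfl | hk
  · constructor
    · intro _; exact ou_short (by omega)
    · intro _; exact ou_short (by omega)
  rw [ou_iff_ou', ou_iff_ou', OU', OU', hlen, hW]
  constructor
  · intro h s h1 h2
    rw [qs_del_iff hkn hk (by omega) (by omega)]
    exact h (s + 1) (by omega) (by omega)
  · intro h s h1 h2
    have hs : k + 1 ≤ s := by omega
    obtain ⟨t, rfl⟩ : ∃ t, s = t + 1 := ⟨s - 1, by omega⟩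
    rw [← qs_del_iff hkn hk (by omega) (by omega)]
    exact h t (by omega) (by omega)

lemma ou_even {W : List (ZMod q)} {k : ℕ} (hk : 1 ≤ k) (hW : W.length = 2 * k) :
    OneUnbordered W ↔ (OneUnbordered (del W k) ∧ ¬ QS W k) := by
  have hkn : k < W.length := by omega
  have hlen : (del W k).length = 2 * k - 1 := by rw [length_del hkn]; omega
  constructor
  · intro h
    refine ⟨?_, (ou_iff_qs W).mp h k hk (by omega)⟩
    rw [ou_iff_ou', OU', hlen]
    intro s h1 h2
    rw [qs_del_iff hkn hk (by omega) (by omega)]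
    exact (ou_iff_qs W).mp h (s + 1) (by omega) (by omega)
  · rintro ⟨h, hqk⟩
    rw [ou_iff_ou', OU', hW]
    intro s h1 h2
    rcases Nat.eq_or_lt_of_le (show k ≤ s by omega) with rfl | hks
    · exact hqk
    · obtain ⟨t, rfl⟩ : ∃ t, s = t + 1 := ⟨s - 1, by omega⟩
      rw [← qs_del_iff hkn hk (by omega) (by omega)]
      rw [ou_iff_ou', OU', hlen] at h
      exact h t (by omega) (by omega)

/-- `U` (of length `2k-1`) is a "quasi-square": `U = P ++ P.drop 1` pattern pointwise. -/
def SQ (U : List (ZMod q)) (k : ℕ) : Prop :=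
  ∀ i, 0 < i → i < k → g U (k - 1 + i) = g U i

lemma qs_ins_mid {U : List (ZMod q)} {k : ℕ} {c : ZMod q} (hk : 1 ≤ k)
    (hU : U.length = 2 * k - 1) :
    QS (ins U k c) k ↔ (SQ U k ∧ (c = g U 0 ∨ c = g U 0 + 1)) := by
  have hkU : k ≤ U.length := by omega
  have hlen : (ins U k c).length = 2 * k := by rw [length_ins hkU]; omega
  have h0 : g (ins U k c) 0 = g U 0 := g_ins_lt hkU hk
  have hc : g (ins U k c) k = c := g_ins_self hkU
  constructor
  · rintro ⟨h1, h2⟩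
    constructor
    · intro i hip hik
      have := h1 i hip (by omega)
      rwa [show k + i = (k - 1 + i) + 1 by omega, g_ins_gt hkU (by omega),
        g_ins_lt hkU (by omega)] at this
    · rwa [hc, h0] at h2
  · rintro ⟨hsq, hor⟩
    constructor
    · intro i hip hin
      have := hsq i hip (by omega)
      rwa [← g_ins_gt (c := c) hkU (show k ≤ k - 1 + i by omega),
        ← g_ins_lt (p := k) (c := c) hkU (show i < k by omega),
        show k - 1 + i + 1 = k + i by omega] at this
    · rwa [hc, h0]

lemma sq_eq {U : List (ZMod q)} {k : ℕ} (hk : 1 ≤ k) (hU : U.length = 2 * k - 1)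
    (h : SQ U k) : U = U.take k ++ (U.take k).drop 1 := by
  have htk : (U.take k).length = k := by simp; omega
  rw [list_eq_iff_g (by simp only [List.length_append, List.length_drop, htk]; omega)]
  intro i hi
  rcases Nat.lt_or_ge i k with hik | hik
  · rw [g_append_left (by omega), g_take hik]
  · rw [g_append_right (by omega), htk, g_drop, g_take (show 1 + (i - k) < k by omega)]
    have := h (i - (k - 1)) (by omega) (by omega)
    rw [show k - 1 + (i - (k - 1)) = i by omega] at this
    rw [this]
    congr 1; omega

lemma sq_of_append {P : List (ZMod q)} {k : ℕ} (hk : 1 ≤ k) (hP : P.length = k) :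
    SQ (P ++ P.drop 1) k := by
  intro i hip hik
  rw [g_append_right (by omega), hP, g_drop,
    g_append_left (by omega)]
  congr 1; omega

lemma take_append_self {P : List (ZMod q)} {k : ℕ} (hP : P.length = k) :
    (P ++ P.drop 1).take k = P := by
  rw [← hP, List.take_left]

/-- transfer of quasi-shifts between a quasi-square and its root -/
lemma qs_sq_iff {U : List (ZMod q)} {k t : ℕ} (hk : 1 ≤ k) (hU : U.length = 2 * k - 1)
    (hsq : SQ U k) (ht : 0 < t) (htk : t < k) :
    QS U (k - 1 + t) ↔ QS (U.take k) t := by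
  have htk' : (U.take k).length = k := by simp; omega
  have key : ∀ j, 0 < j → j < k → g U (k - 1 + j) = g U j := hsq
  constructor
  · rintro ⟨h1, h2⟩
    constructor
    · intro i hip hin
      rw [htk'] at hin
      have := h1 i hip (by omega)
      rw [show k - 1 + t + i = k - 1 + (t + i) by omega, key (t + i) (by omega) (by omega)]
        at this
      rw [g_take (show t + i < k by omega), g_take (show i < k by omega)]
      exact this
    · rw [key t ht htk] at h2
      rw [g_take (show t < k by omega), g_take (show 0 < k by omega)]
      exact h2
  · rintro ⟨h1, h2⟩
    rw [htk'] at h1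
    constructor
    · intro i hip hin
      have := h1 i hip (by omega)
      rw [g_take (show t + i < k by omega), g_take (show i < k by omega)] at this
      rwa [show k - 1 + t + i = k - 1 + (t + i) by omega, key (t + i) (by omega) (by omega)]
    · rw [g_take (by omega), g_take (by omega)] at h2
      rwa [key t ht htk]

lemma ou_sq {U : List (ZMod q)} {k : ℕ} (hk : 1 ≤ k) (hU : U.length = 2 * k - 1)
    (hsq : SQ U k) : OneUnbordered U ↔ OneUnbordered (U.take k) := by
  have htk' : (U.take k).length = k := by simp; omega
  constructor
  · intro h
    rw [ou_iff_qs] at h ⊢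
    intro t ht htk
    rw [htk'] at htk
    rw [← qs_sq_iff hk hU hsq ht htk]
    exact h (k - 1 + t) (by omega) (by omega)
  · intro h
    rw [ou_iff_qs] at h
    rw [ou_iff_ou', OU', hU]
    intro s h1 h2
    obtain ⟨t, rfl⟩ : ∃ t, s = k - 1 + t := ⟨s - (k - 1), by omega⟩
    rw [qs_sq_iff hk hU hsq (by omega) (by omega)]
    exact h t (by omega) (by rw [htk']; omega)

end OUP

namespace OUP

lemma finite_Sm (q m : ℕ) [NeZero q] :
    Finite {w : List (ZMod q) // w.length = m ∧ OneUnbordered w} :=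
  Set.Finite.to_subtype (((List.finite_length_eq (ZMod q) m)).subset fun _ hw => hw.1)

variable {q : ℕ}

lemma count_zero : countOneUnbordered q 0 = 1 := by
  rw [countOneUnbordered, Nat.card_eq_one_iff_unique]
  constructor
  · constructor
    rintro ⟨w₁, h₁, -⟩ ⟨w₂, h₂, -⟩
    rw [List.length_eq_zero_iff] at h₁ h₂
    simp [h₁, h₂]
  · exact ⟨[], rfl, ou_short (by simp)⟩

lemma count_odd (hq : 2 ≤ q) (k : ℕ) :
    countOneUnbordered q (2 * k + 1) = q * countOneUnbordered q (2 * k) := by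
  haveI : NeZero q := ⟨by omega⟩
  haveI := finite_Sm q (2 * k)
  haveI := finite_Sm q (2 * k + 1)
  set A := {w : List (ZMod q) // w.length = 2 * k ∧ OneUnbordered w}
  set B := {w : List (ZMod q) // w.length = 2 * k + 1 ∧ OneUnbordered w}
  have hF : ∀ (U : List (ZMod q)), U.length = 2 * k → OneUnbordered U → ∀ c : ZMod q,
      (ins U k c).length = 2 * k + 1 ∧ OneUnbordered (ins U k c) := by
    intro U hlen hou c
    have hkU : k ≤ U.length := by omega
    have h1 : (ins U k c).length = 2 * k + 1 := by rw [length_ins hkU]; omega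
    refine ⟨h1, ?_⟩
    rw [ou_odd h1, del_ins hkU]
    exact hou
  let F : A × ZMod q → B := fun x =>
    ⟨ins x.1.1 k x.2, (hF x.1.1 x.1.2.1 x.1.2.2 x.2).1, (hF x.1.1 x.1.2.1 x.1.2.2 x.2).2⟩
  have hFbij : Function.Bijective F := by
    constructor
    · rintro ⟨⟨U₁, h₁⟩, c₁⟩ ⟨⟨U₂, h₂⟩, c₂⟩ h
      have hv : ins U₁ k c₁ = ins U₂ k c₂ := congrArg Subtype.val h
      have hU : U₁ = U₂ := by
        rw [← del_ins (c := c₁) (show k ≤ U₁.length by omega),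
          ← del_ins (c := c₂) (show k ≤ U₂.length by omega), hv]
      have hc : c₁ = c₂ := by
        rw [← g_ins_self (c := c₁) (p := k) (show k ≤ U₁.length by omega),
          ← g_ins_self (c := c₂) (p := k) (show k ≤ U₂.length by omega), hv]
      simp [hU, hc]
    · rintro ⟨W, hWlen, hWou⟩
      have hkW : k < W.length := by omega
      have hdel : (del W k).length = 2 * k := by rw [length_del hkW]; omega
      have hdou : OneUnbordered (del W k) := (ou_odd hWlen).mp hWou
      refine ⟨⟨⟨del W k, hdel, hdou⟩, g W k⟩, ?_⟩
      apply Subtype.ext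
      show ins (del W k) k (g W k) = W
      exact ins_del hkW
  calc countOneUnbordered q (2 * k + 1) = Nat.card B := rfl
    _ = Nat.card (A × ZMod q) := (Nat.card_eq_of_bijective F hFbij).symm
    _ = Nat.card A * q := by rw [Nat.card_prod, Nat.card_zmod]
    _ = q * countOneUnbordered q (2 * k) := by rw [Nat.mul_comm]; rfl

lemma count_even (hq : 2 ≤ q) {k : ℕ} (hk : 1 ≤ k) :
    countOneUnbordered q (2 * k) + 2 * countOneUnbordered q k
      = q * countOneUnbordered q (2 * k - 1) := by
  haveI : NeZero q := ⟨by omega⟩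
  haveI : Nontrivial (ZMod q) := @ZMod.nontrivial q ⟨by omega⟩
  haveI := finite_Sm q (2 * k)
  haveI := finite_Sm q k
  haveI := finite_Sm q (2 * k - 1)
  have hFl : ∀ (W : List (ZMod q)), W.length = 2 * k → OneUnbordered W →
      ((del W k).length = 2 * k - 1 ∧ OneUnbordered (del W k)) := by
    intro W hlen hou
    have hkW : k < W.length := by omega
    exact ⟨by rw [length_del hkW]; omega, ((ou_even hk hlen).mp hou).1⟩
  have hFr : ∀ (p : List (ZMod q)), p.length = k → OneUnbordered p →
      ((p ++ p.drop 1).length = 2 * k - 1 ∧ OneUnbordered (p ++ p.drop 1)) := by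
    intro p hlen hou
    have h1 : (p ++ p.drop 1).length = 2 * k - 1 := by simp [hlen]; omega
    refine ⟨h1, ?_⟩
    rw [ou_sq hk h1 (sq_of_append hk hlen), take_append_self hlen]
    exact hou
  let F : {w : List (ZMod q) // w.length = 2 * k ∧ OneUnbordered w} ⊕
        ({w : List (ZMod q) // w.length = k ∧ OneUnbordered w} × Bool) →
      {w : List (ZMod q) // w.length = 2 * k - 1 ∧ OneUnbordered w} × ZMod q := fun x =>
    match x with
    | Sum.inl ⟨W, hW⟩ => (⟨del W k, hFl W hW.1 hW.2⟩, g W k)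
    | Sum.inr (⟨p, hp⟩, b) =>
        (⟨p ++ p.drop 1, hFr p hp.1 hp.2⟩, g p 0 + (if b then 1 else 0))
  have hqsr : ∀ (p : List (ZMod q)), p.length = k → ∀ b : Bool,
      QS (ins (p ++ p.drop 1) k (g p 0 + (if b then 1 else 0))) k := by
    intro p hlen b
    have h1 : (p ++ p.drop 1).length = 2 * k - 1 := by simp [hlen]; omega
    rw [qs_ins_mid hk h1]
    refine ⟨sq_of_append hk hlen, ?_⟩
    have h0 : g (p ++ p.drop 1) 0 = g p 0 := g_append_left (by omega)
    rw [h0]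
    cases b
    · left; simp
    · right; simp
  have hFbij : Function.Bijective F := by
    constructor
    · rintro (⟨W₁, hW₁⟩ | ⟨⟨p₁, hp₁⟩, b₁⟩) (⟨W₂, hW₂⟩ | ⟨⟨p₂, hp₂⟩, b₂⟩) h <;>
        simp only [F] at h <;>
        have h1 := congrArg Subtype.val (congrArg Prod.fst h) <;>
        have h2 := congrArg Prod.snd h <;>
        simp only at h1 h2
      · -- inl inl
        have : W₁ = W₂ := by
          rw [← ins_del (show k < W₁.length by omega),
            ← ins_del (show k < W₂.length by omega), h1, h2]
        simp [this]
      · -- inl inr : contradiction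
        exfalso
        have hW₁eq : W₁ = ins (p₂ ++ p₂.drop 1) k (g p₂ 0 + (if b₂ then 1 else 0)) := by
          rw [← ins_del (show k < W₁.length by omega), h1, h2]
        have hqs : QS W₁ k := by rw [hW₁eq]; exact hqsr p₂ hp₂.1 b₂
        exact ((ou_even hk hW₁.1).mp hW₁.2).2 hqs
      · -- inr inl : contradiction
        exfalso
        have hW₂eq : W₂ = ins (p₁ ++ p₁.drop 1) k (g p₁ 0 + (if b₁ then 1 else 0)) := by
          rw [← ins_del (show k < W₂.length by omega), ← h1, ← h2]
        have hqs : QS W₂ k := by rw [hW₂eq]; exact hqsr p₁ hp₁.1 b₁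
        exact ((ou_even hk hW₂.1).mp hW₂.2).2 hqs
      · -- inr inr
        have hpp : p₁ = p₂ := by
          have := congrArg (List.take k) h1
          rwa [take_append_self hp₁.1, take_append_self hp₂.1] at this
        have hbb : b₁ = b₂ := by
          rw [hpp] at h2
          have h01 : (if b₁ then (1:ZMod q) else 0) = (if b₂ then 1 else 0) :=
            add_left_cancel h2
          cases b₁ <;> cases b₂
          · rfl
          · exact absurd h01.symm (by simp)
          · exact absurd h01 (by simp)
          · rfl
        simp [hpp, hbb]
    · rintro ⟨⟨u, hulen, huou⟩, c⟩
      have hku : k ≤ u.length := by omega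
      by_cases hou : OneUnbordered (ins u k c)
      · have hWlen : (ins u k c).length = 2 * k := by rw [length_ins hku]; omega
        refine ⟨Sum.inl ⟨ins u k c, hWlen, hou⟩, ?_⟩
        simp only [F]
        refine Prod.ext ?_ ?_
        · exact Subtype.ext (del_ins hku)
        · exact g_ins_self hku
      · have hWlen : (ins u k c).length = 2 * k := by rw [length_ins hku]; omega
        have hqs : QS (ins u k c) k := by
          by_contra hqs
          exact hou ((ou_even hk hWlen).mpr ⟨by rw [del_ins hku]; exact huou, hqs⟩)
        rw [qs_ins_mid hk hulen] at hqs
        obtain ⟨hsq, hor⟩ := hqs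
        have hPlen : (u.take k).length = k := by simp; omega
        have hPou : OneUnbordered (u.take k) := (ou_sq hk hulen hsq).mp huou
        have hueq : u.take k ++ (u.take k).drop 1 = u := (sq_eq hk hulen hsq).symm
        have hg0 : g (u.take k) 0 = g u 0 := g_take (by omega)
        rcases hor with hc | hc
        · refine ⟨Sum.inr (⟨u.take k, hPlen, hPou⟩, false), ?_⟩
          simp only [F]
          refine Prod.ext (Subtype.ext hueq) ?_
          show g (u.take k) 0 + (if false then 1 else 0) = c
          rw [hg0]; simp [hc]
        · refine ⟨Sum.inr (⟨u.take k, hPlen, hPou⟩, true), ?_⟩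
          simp only [F]
          refine Prod.ext (Subtype.ext hueq) ?_
          show g (u.take k) 0 + (if true then 1 else 0) = c
          rw [hg0]; simp [hc]
  have hcard := Nat.card_eq_of_bijective F hFbij
  rw [Nat.card_sum, Nat.card_prod, Nat.card_prod, Nat.card_zmod,
    Nat.card_eq_fintype_card (α := Bool), Fintype.card_bool] at hcard
  show Nat.card {w : List (ZMod q) // w.length = 2 * k ∧ OneUnbordered w} +
      2 * Nat.card {w : List (ZMod q) // w.length = k ∧ OneUnbordered w}
    = q * Nat.card {w : List (ZMod q) // w.length = 2 * k - 1 ∧ OneUnbordered w}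
  linarith [hcard]

end OUP

namespace OUP

lemma count_one (hq : 2 ≤ q) : countOneUnbordered q 1 = q := by
  have := count_odd hq 0
  simpa [count_zero] using this

lemma count_rec (hq : 2 ≤ q) (n : ℕ) :
    (countOneUnbordered q (n + 1) : ℤ) - q * countOneUnbordered q n
      = -2 * (if 2 ∣ (n + 1) then (countOneUnbordered q ((n + 1) / 2) : ℤ) else 0) := by
  rcases Nat.even_or_odd n with he | ho
  · -- n even, n+1 odd
    have he' := Nat.even_iff.mp he
    obtain ⟨k, rfl⟩ : ∃ k, n = 2 * k := ⟨n / 2, by omega⟩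
    rw [if_neg (by omega), count_odd hq k]
    push_cast
    ring
  · -- n odd, n + 1 = 2k with k ≥ 1
    have ho' := Nat.odd_iff.mp ho
    obtain ⟨k, hk⟩ : ∃ k, n + 1 = 2 * k ∧ 1 ≤ k := ⟨(n + 1) / 2, by omega⟩
    obtain ⟨hk1, hk2⟩ := hk
    have hrec := count_even hq hk2
    have hn : n = 2 * k - 1 := by omega
    rw [hk1, if_pos (by omega), show 2 * k / 2 = k by omega, hn]
    have : (countOneUnbordered q (2 * k) : ℤ) + 2 * countOneUnbordered q k
        = q * countOneUnbordered q (2 * k - 1) := by exact_mod_cast congrArg (Nat.cast : ℕ → ℤ) hrec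
    linarith

end OUP


/-- For `q ≥ 2`, the generating function `β = ∑ b_m X^m ∈ ℤ[[X]]` of the numbers `b_m`
of 1-unbordered words of length `m` over `ℤ/qℤ` satisfies
`(1 − qX)·β(X) = 3 − 2·β(X²)`. -/
theorem oneUnbordered_gf_functional_equation (q : ℕ) (hq : 2 ≤ q)
    (β : PowerSeries ℤ)
    (hβ : β = PowerSeries.mk fun m => (countOneUnbordered q m : ℤ)) :
    (1 - (q : PowerSeries ℤ) * PowerSeries.X) * β = 3 - 2 * substXsq β := by
  subst hβ
  apply PowerSeries.ext
  intro n
  have hq' : ((q : ℕ) : PowerSeries ℤ) = PowerSeries.C (R := ℤ) (q : ℤ) :=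
    (map_natCast (PowerSeries.C (R := ℤ)) q).symm
  have h3 : (3 : PowerSeries ℤ) = PowerSeries.C (R := ℤ) 3 := (map_ofNat (PowerSeries.C (R := ℤ)) 3).symm
  have h2 : (2 : PowerSeries ℤ) = PowerSeries.C (R := ℤ) 2 := (map_ofNat (PowerSeries.C (R := ℤ)) 2).symm
  rw [sub_mul, one_mul, hq', mul_assoc, map_sub, map_sub, h3, h2,
    PowerSeries.coeff_C_mul, PowerSeries.coeff_C_mul, PowerSeries.coeff_C,
    substXsq, PowerSeries.coeff_mk, PowerSeries.coeff_mk]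
  cases n with
  | zero =>
    rw [PowerSeries.coeff_zero_X_mul]
    simp [OUP.count_zero]
  | succ n =>
    rw [PowerSeries.coeff_succ_X_mul, PowerSeries.coeff_mk, PowerSeries.coeff_mk,
      if_neg (Nat.succ_ne_zero n)]
    have := OUP.count_rec hq n
    by_cases hd : 2 ∣ (n + 1)
    · rw [if_pos hd] at this ⊢
      linarith
    · rw [if_neg hd] at this ⊢
      linarith
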